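/- Let n ≥ 1 and s ≥ 1 be natural numbers, let R and Σ be symmetric positive definite s×s real matrices, let E be the real matrix of size (Fin n × Fin s) × Fin s defined by E((i,j), k) = 1 if j = k and 0 otherwise, and set W = J_n ⊗ R + I_n ⊗ Σ. Then for every vector v : Fin n × Fin s → ℝ, ∫_{δ ∈ ℝ^s} (2π)^(−ns/2) · det(Σ)^(−n/2) · exp(−(1/2)·(v − E·δ)ᵀ·(I_n ⊗ Σ)⁻¹·(v − E·δ)) · (2π)^(−s/2) · det(R)^(−1/2) · exp(−(1/2)·δᵀ·R⁻¹·δ) dδ = (2π)^(−ns/2) · det(W)^(−1/2) · exp(−(1/2)·vᵀ·W⁻¹·v), where the integral is with respect to s-dimensional Lebesgue measure. -/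

import Mathlib

open Matrix MeasureTheory Real
open scoped Kronecker

namespace Stmt10Aux

lemma mulVec_dot {m n : Type*} [Fintype m] [Fintype n]
    (A : Matrix m n ℝ) (y : n → ℝ) (z : m → ℝ) :
    (A *ᵥ y) ⬝ᵥ z = y ⬝ᵥ (Aᵀ *ᵥ z) := by
  rw [dotProduct_comm, Matrix.dotProduct_mulVec, dotProduct_comm,
    ← Matrix.mulVec_transpose]

lemma dot_symm {n : Type*} [Fintype n] (P : Matrix n n ℝ) (hP : Pᵀ = P) (x y : n → ℝ) :
    x ⬝ᵥ P *ᵥ y = y ⬝ᵥ P *ᵥ x := by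
  rw [Matrix.dotProduct_mulVec, ← Matrix.mulVec_transpose, hP, dotProduct_comm]

lemma quad_expand {n : Type*} [Fintype n] (P : Matrix n n ℝ) (hP : Pᵀ = P) (x y : n → ℝ) :
    (x - y) ⬝ᵥ P *ᵥ (x - y)
      = x ⬝ᵥ P *ᵥ x - 2 * (y ⬝ᵥ P *ᵥ x) + y ⬝ᵥ P *ᵥ y := by
  have h := dot_symm P hP x y
  rw [Matrix.mulVec_sub, dotProduct_sub, sub_dotProduct,
    sub_dotProduct, h]
  ring

lemma real_herm {m : Type*} [Fintype m] {M : Matrix m m ℝ} (h : Mᵀ = M) : M.IsHermitian := by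
  show Mᴴ = M
  have : Mᴴ = Mᵀ := by ext i j; simp [Matrix.conjTranspose_apply]
  rw [this, h]

lemma herm_transpose {m : Type*} [Fintype m] {M : Matrix m m ℝ} (h : M.IsHermitian) : Mᵀ = M := by
  have h2 : Mᴴ = Mᵀ := by ext i j; simp [Matrix.conjTranspose_apply]
  rw [← h2, h]

lemma psd_det_nonneg {s : ℕ} {S : Matrix (Fin s) (Fin s) ℝ} (hS : S.PosSemidef) :
    0 ≤ S.det := by
  exact hS.det_nonneg

open scoped MatrixOrder in
lemma gauss_int {s : ℕ} {M : Matrix (Fin s) (Fin s) ℝ} (hM : M.PosDef) :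
    ∫ x : Fin s → ℝ, Real.exp (-(1 / 2) * (x ⬝ᵥ M *ᵥ x))
      = (2 * Real.pi) ^ ((s : ℝ) / 2) * M.det ^ (-(1 : ℝ) / 2) := by
  have hMdet : 0 < M.det := hM.det_pos
  have hMinv : (M⁻¹).PosDef := hM.inv
  set S : Matrix (Fin s) (Fin s) ℝ := CFC.sqrt (M⁻¹) with hSdef
  have hSpsd : S.PosSemidef := (CFC.sqrt_nonneg (M⁻¹)).posSemidef
  have hSS : S * S = M⁻¹ := CFC.sqrt_mul_sqrt_self (M⁻¹) hMinv.posSemidef.nonneg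
  have hSsym : Sᵀ = S := herm_transpose hSpsd.isHermitian
  have hdetSS : S.det * S.det = (M.det)⁻¹ := by
    rw [← Matrix.det_mul, hSS, Matrix.det_nonsing_inv, Ring.inverse_eq_inv']
  have hSdetpos : 0 < S.det := by
    rcases (psd_det_nonneg hSpsd).lt_or_eq with h | h
    · exact h
    · exfalso
      have : (M.det)⁻¹ = 0 := by rw [← hdetSS, ← h, mul_zero]
      exact (inv_pos.mpr hMdet).ne' this
  have hSdetne : S.det ≠ 0 := hSdetpos.ne'
  have hMunit : IsUnit M.det := hMdet.ne'.isUnit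
  have hSMS : S * M * S = 1 := by
    have h1 : S * M * (S * S) = S := by
      rw [hSS, Matrix.mul_assoc S M M⁻¹, Matrix.mul_nonsing_inv _ hMunit, Matrix.mul_one]
    have h2 : S * M * S * S = S := by
      rw [Matrix.mul_assoc (S * M) S S]; exact h1
    calc S * M * S = S * M * S * (S * S⁻¹) := by
          rw [Matrix.mul_nonsing_inv _ hSdetne.isUnit, Matrix.mul_one]
      _ = (S * M * S * S) * S⁻¹ := by rw [Matrix.mul_assoc (S * M * S) S S⁻¹]
      _ = 1 := by rw [h2, Matrix.mul_nonsing_inv _ hSdetne.isUnit]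
  have hmap := Real.map_matrix_volume_pi_eq_smul_volume_pi (M := S) hSdetne
  have hcont : Continuous fun x : Fin s → ℝ => Real.exp (-(1 / 2) * (x ⬝ᵥ M *ᵥ x)) := by
    exact (Continuous.mul continuous_const
      (continuous_id.dotProduct (continuous_const.matrix_mulVec continuous_id))).rexp
  have hmeas : AEMeasurable (Matrix.toLin' S) (volume : Measure (Fin s → ℝ)) :=
    (LinearMap.continuous_on_pi _).measurable.aemeasurable
  have key : ∫ y : Fin s → ℝ, Real.exp (-(1 / 2) * ((S *ᵥ y) ⬝ᵥ M *ᵥ (S *ᵥ y)))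
      = (S.det)⁻¹ * ∫ x : Fin s → ℝ, Real.exp (-(1 / 2) * (x ⬝ᵥ M *ᵥ x)) := by
    have h1 : ∫ x, Real.exp (-(1 / 2) * (x ⬝ᵥ M *ᵥ x))
        ∂(Measure.map (Matrix.toLin' S) volume)
        = ∫ y, Real.exp (-(1 / 2) * ((Matrix.toLin' S y) ⬝ᵥ M *ᵥ (Matrix.toLin' S y))) :=
      integral_map hmeas hcont.aestronglyMeasurable
    rw [hmap, integral_smul_measure,
      ENNReal.toReal_ofReal (abs_nonneg _), abs_of_pos (inv_pos.mpr hSdetpos)] at h1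
    simp only [Matrix.toLin'_apply] at h1
    rw [← h1, smul_eq_mul]
  have hsub : ∀ y : Fin s → ℝ, (S *ᵥ y) ⬝ᵥ M *ᵥ (S *ᵥ y) = y ⬝ᵥ y := by
    intro y
    rw [Matrix.mulVec_mulVec, mulVec_dot, hSsym, Matrix.mulVec_mulVec, ← Matrix.mul_assoc,
      hSMS, Matrix.one_mulVec]
  simp only [hsub] at key
  have hprod : ∫ y : Fin s → ℝ, Real.exp (-(1 / 2) * (y ⬝ᵥ y))
      = (Real.sqrt (2 * Real.pi)) ^ s := by
    have h2 : ∀ y : Fin s → ℝ, Real.exp (-(1 / 2) * (y ⬝ᵥ y))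
        = ∏ i, Real.exp (-(1 / 2) * (y i ^ 2)) := by
      intro y
      rw [← Real.exp_sum, ← Finset.mul_sum]
      congr 1
      simp [dotProduct, sq]
    simp only [h2]
    rw [MeasureTheory.integral_fintype_prod_volume_eq_pow (ι := Fin s) fun t : ℝ => Real.exp (-(1/2) * t^2)]
    simp only [Fintype.card_fin]
    congr 1
    have := integral_gaussian (1 / 2 : ℝ)
    rw [this]
    congr 1
    rw [div_div_eq_mul_div]
    ring
  rw [hprod] at key
  have hIdet : ∫ x : Fin s → ℝ, Real.exp (-(1 / 2) * (x ⬝ᵥ M *ᵥ x))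
      = S.det * (Real.sqrt (2 * Real.pi)) ^ s := by
    field_simp at key ⊢
    linarith [key]
  rw [hIdet]
  have hdetS : S.det = M.det ^ (-(1 : ℝ) / 2) := by
    have h1 : Real.sqrt ((M.det)⁻¹) = S.det := by
      rw [← hdetSS, Real.sqrt_mul_self hSdetpos.le]
    rw [← h1, ← Real.rpow_neg_one M.det, Real.sqrt_eq_rpow, ← Real.rpow_mul hMdet.le]
    norm_num
  have hsqrt : (Real.sqrt (2 * Real.pi)) ^ s = (2 * Real.pi) ^ ((s : ℝ) / 2) := by
    rw [Real.sqrt_eq_rpow, ← Real.rpow_natCast ((2 * Real.pi) ^ ((1:ℝ)/2)) s,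
      ← Real.rpow_mul (by positivity)]
    congr 1
    ring
  rw [hdetS, hsqrt, mul_comm]

lemma E_facts (n s : ℕ)
    (E : Matrix (Fin n × Fin s) (Fin s) ℝ)
    (hE : E = Matrix.of fun p k => if p.2 = k then 1 else 0) :
    (∀ B : Matrix (Fin s) (Fin s) ℝ, ((1 : Matrix (Fin n) (Fin n) ℝ) ⊗ₖ B) * E = E * B)
    ∧ Eᵀ * E = (n : ℝ) • 1
    ∧ (∀ R : Matrix (Fin s) (Fin s) ℝ,
        (Matrix.of fun _ _ => (1:ℝ) : Matrix (Fin n) (Fin n) ℝ) ⊗ₖ R = E * R * Eᵀ) := by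
  subst hE
  refine ⟨fun B => ?_, ?_, fun R => ?_⟩
  · ext ⟨i, j⟩ k
    simp [Matrix.mul_apply, Matrix.kroneckerMap_apply, Matrix.one_apply,
      Fintype.sum_prod_type, ite_mul, mul_ite]
  · ext k l
    simp [Matrix.mul_apply, Matrix.transpose_apply, Fintype.sum_prod_type, ite_mul, mul_ite,
      Finset.sum_ite_eq, Matrix.one_apply, Matrix.smul_apply]
    rcases eq_or_ne k l with h | h
    · simp [h]
    · simp [h, h.symm]
  · ext ⟨i, j⟩ ⟨i', j'⟩
    simp [Matrix.mul_apply, Matrix.kroneckerMap_apply, Matrix.transpose_apply, ite_mul, mul_ite]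

lemma kron_one_posDef {n s : ℕ} {Sig : Matrix (Fin s) (Fin s) ℝ} (hSig : Sig.PosDef) :
    ((1 : Matrix (Fin n) (Fin n) ℝ) ⊗ₖ Sig).PosDef := by
  refine Matrix.PosDef.of_dotProduct_mulVec_pos ?_ ?_
  · apply real_herm
    rw [← Matrix.kroneckerMap_transpose, Matrix.transpose_one, herm_transpose hSig.isHermitian]
  · intro x hx
    have hq : ∀ x : Fin n × Fin s → ℝ, x ⬝ᵥ ((1 : Matrix (Fin n) (Fin n) ℝ) ⊗ₖ Sig) *ᵥ x
        = ∑ i : Fin n, (fun j => x (i, j)) ⬝ᵥ Sig *ᵥ (fun j => x (i, j)) := by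
      intro y
      simp [dotProduct, Matrix.mulVec, Matrix.kroneckerMap_apply, Matrix.one_apply,
        Fintype.sum_prod_type, ite_mul, mul_ite, Finset.mul_sum, Finset.sum_ite_eq]
    simp only [star_trivial, hq]
    obtain ⟨⟨i, j⟩, hij⟩ : ∃ p, x p ≠ 0 := by
      by_contra h
      push_neg at h
      exact hx (funext h)
    apply Finset.sum_pos'
    · intro i _
      simpa using hSig.posSemidef.dotProduct_mulVec_nonneg (fun j => x (i, j))
    · refine ⟨i, Finset.mem_univ _, ?_⟩
      have : (fun j => x (i, j)) ≠ 0 := by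
        intro h
        exact hij (congrFun h j)
      simpa using hSig.dotProduct_mulVec_pos this

end Stmt10Aux

open Stmt10Aux

theorem stmt10 (n s : ℕ) (hn : 1 ≤ n) (hs : 1 ≤ s)
    (R Sig : Matrix (Fin s) (Fin s) ℝ) (hR : R.PosDef) (hSig : Sig.PosDef)
    (v : Fin n × Fin s → ℝ) :
    let E : Matrix (Fin n × Fin s) (Fin s) ℝ :=
      Matrix.of fun p k => if p.2 = k then 1 else 0
    let W : Matrix (Fin n × Fin s) (Fin n × Fin s) ℝ :=
      (Matrix.of fun _ _ => (1 : ℝ) : Matrix (Fin n) (Fin n) ℝ) ⊗ₖ R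
        + (1 : Matrix (Fin n) (Fin n) ℝ) ⊗ₖ Sig
    (∫ δ : Fin s → ℝ,
        ((2 * Real.pi) ^ (-((n : ℝ) * (s : ℝ)) / 2) * Sig.det ^ (-(n : ℝ) / 2) *
          Real.exp (-(1 / 2) *
            ((v - E.mulVec δ) ⬝ᵥ
              (((1 : Matrix (Fin n) (Fin n) ℝ) ⊗ₖ Sig)⁻¹).mulVec (v - E.mulVec δ))))
        * ((2 * Real.pi) ^ (-(s : ℝ) / 2) * R.det ^ (-(1 : ℝ) / 2) *
            Real.exp (-(1 / 2) * (δ ⬝ᵥ R⁻¹.mulVec δ))))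
      = (2 * Real.pi) ^ (-((n : ℝ) * (s : ℝ)) / 2) * W.det ^ (-(1 : ℝ) / 2) *
          Real.exp (-(1 / 2) * (v ⬝ᵥ W⁻¹.mulVec v)) := by
  intro E W
  classical
  obtain ⟨hcomm, hEtE, hJ⟩ := E_facts n s E rfl
  have hbigPD : ((1 : Matrix (Fin n) (Fin n) ℝ) ⊗ₖ Sig).PosDef := kron_one_posDef hSig
  set A0 := ((1 : Matrix (Fin n) (Fin n) ℝ) ⊗ₖ Sig)⁻¹ with hA0def
  have hA0 : A0 = (1 : Matrix (Fin n) (Fin n) ℝ) ⊗ₖ Sig⁻¹ := by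
    rw [hA0def, Matrix.inv_kronecker]
    congr 1
    rw [Matrix.inv_eq_left_inv (by rw [Matrix.one_mul])]
  have hA0PD : A0.PosDef := hbigPD.inv
  have hA0sym : A0ᵀ = A0 := herm_transpose hA0PD.isHermitian
  have hEAE : Eᵀ * A0 * E = (n : ℝ) • Sig⁻¹ := by
    rw [Matrix.mul_assoc, hA0, hcomm Sig⁻¹, ← Matrix.mul_assoc, hEtE, smul_mul_assoc,
      Matrix.one_mul]
  set M := (n : ℝ) • Sig⁻¹ + R⁻¹ with hMdef
  have hnpos : (0 : ℝ) < n := by exact_mod_cast hn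
  have hsmulPD : ((n : ℝ) • Sig⁻¹).PosDef := by
    refine Matrix.PosDef.of_dotProduct_mulVec_pos ?_ ?_
    · apply real_herm
      rw [Matrix.transpose_smul, herm_transpose hSig.inv.isHermitian]
    · intro x hx
      rw [Matrix.smul_mulVec, dotProduct_smul]
      have := hSig.inv.dotProduct_mulVec_pos hx
      simp only [star_trivial] at this ⊢
      exact mul_pos hnpos this
  have hMPD : M.PosDef := hsmulPD.add hR.inv
  have hMdetU : IsUnit M.det := hMPD.det_pos.ne'.isUnit
  have hRdetU : IsUnit R.det := hR.det_pos.ne'.isUnit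
  have hbigU : IsUnit ((1 : Matrix (Fin n) (Fin n) ℝ) ⊗ₖ Sig) :=
    (Matrix.isUnit_iff_isUnit_det _).2 hbigPD.det_pos.ne'.isUnit
  have hRU : IsUnit R := (Matrix.isUnit_iff_isUnit_det _).2 hRdetU
  have hMU : IsUnit M := (Matrix.isUnit_iff_isUnit_det _).2 hMdetU
  have hEH : Eᴴ = Eᵀ := by ext p k; simp [Matrix.conjTranspose_apply]
  have hWalt : W = E * R * Eᵀ + (1 : Matrix (Fin n) (Fin n) ℝ) ⊗ₖ Sig := by
    show (Matrix.of fun _ _ => (1 : ℝ) : Matrix (Fin n) (Fin n) ℝ) ⊗ₖ R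
        + (1 : Matrix (Fin n) (Fin n) ℝ) ⊗ₖ Sig = _
    rw [hJ R]
  have hWPD : W.PosDef := by
    rw [hWalt]
    have hpsd : (E * R * Eᵀ).PosSemidef := by
      rw [← hEH]
      exact hR.posSemidef.mul_mul_conjTranspose_same E
    exact Matrix.PosDef.posSemidef_add hpsd hbigPD
  have hWdetU : IsUnit W.det := hWPD.det_pos.ne'.isUnit
  -- Woodbury
  have hACeq : R⁻¹ + Eᵀ * A0 * E = M := by rw [hEAE, hMdef, add_comm]
  have hWinv : W⁻¹ = A0 - A0 * E * M⁻¹ * Eᵀ * A0 := by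
    have h := Matrix.add_mul_mul_inv_eq_sub ((1 : Matrix (Fin n) (Fin n) ℝ) ⊗ₖ Sig) E R Eᵀ
      hbigU hRU (by rw [← hA0def, hACeq]; exact hMU)
    rw [← hA0def, hACeq] at h
    rw [hWalt, add_comm (E * R * Eᵀ), h]
  -- determinant
  have hdetW : W.det = Sig.det ^ n * (M.det * R.det) := by
    have h := Matrix.det_add_mul (A := (1 : Matrix (Fin n) (Fin n) ℝ) ⊗ₖ Sig) (E * R) Eᵀ
      hbigPD.det_pos.ne'.isUnit
    have hinner : (1 : Matrix (Fin s) (Fin s) ℝ) + Eᵀ * A0 * (E * R) = M * R := by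
      rw [← Matrix.mul_assoc (Eᵀ * A0) E R, hEAE, hMdef, Matrix.add_mul,
        Matrix.nonsing_inv_mul _ hRdetU, add_comm]
    rw [← hA0def, hinner] at h
    have hWeq : W = (1 : Matrix (Fin n) (Fin n) ℝ) ⊗ₖ Sig + E * R * Eᵀ := by
      rw [hWalt, add_comm]
    rw [hWeq, h, Matrix.det_mul, Matrix.det_kronecker]
    simp [Fintype.card_fin]
  -- quadratic form identity
  set b := (Eᵀ * A0) *ᵥ v with hbdef
  set m0 := M⁻¹ *ᵥ b with hm0def
  have hMsym : Mᵀ = M := herm_transpose hMPD.isHermitian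
  have hMinvsym : (M⁻¹)ᵀ = M⁻¹ := herm_transpose hMPD.inv.isHermitian
  have hMm0 : M *ᵥ m0 = b := by
    rw [hm0def, Matrix.mulVec_mulVec, Matrix.mul_nonsing_inv _ hMdetU, Matrix.one_mulVec]
  have hquad : ∀ δ : Fin s → ℝ,
      (v - E *ᵥ δ) ⬝ᵥ A0 *ᵥ (v - E *ᵥ δ) + δ ⬝ᵥ R⁻¹ *ᵥ δ
        = (δ - m0) ⬝ᵥ M *ᵥ (δ - m0) + v ⬝ᵥ W⁻¹ *ᵥ v := by
    intro δ
    have e1 := quad_expand A0 hA0sym v (E *ᵥ δ)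
    have e2 : (E *ᵥ δ) ⬝ᵥ A0 *ᵥ v = δ ⬝ᵥ b := by
      rw [mulVec_dot, hbdef, ← Matrix.mulVec_mulVec]
    have e3 : (E *ᵥ δ) ⬝ᵥ A0 *ᵥ (E *ᵥ δ) = δ ⬝ᵥ ((n : ℝ) • Sig⁻¹) *ᵥ δ := by
      rw [mulVec_dot, Matrix.mulVec_mulVec, Matrix.mulVec_mulVec, hEAE]
    have e4 := quad_expand M hMsym δ m0
    have e5 : m0 ⬝ᵥ M *ᵥ δ = δ ⬝ᵥ b := by
      rw [dot_symm M hMsym, hMm0]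
    have e6 : m0 ⬝ᵥ M *ᵥ m0 = b ⬝ᵥ M⁻¹ *ᵥ b := by
      rw [hMm0, hm0def, mulVec_dot, hMinvsym]
    have e7 : v ⬝ᵥ W⁻¹ *ᵥ v = v ⬝ᵥ A0 *ᵥ v - b ⬝ᵥ M⁻¹ *ᵥ b := by
      rw [hWinv, Matrix.sub_mulVec, dotProduct_sub]
      congr 1
      have hmat : A0 * E * M⁻¹ * Eᵀ * A0 = (Eᵀ * A0)ᵀ * (M⁻¹ * (Eᵀ * A0)) := by
        rw [Matrix.transpose_mul, Matrix.transpose_transpose, hA0sym]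
        simp only [Matrix.mul_assoc]
      rw [hmat, ← Matrix.mulVec_mulVec, ← mulVec_dot, hbdef, Matrix.mulVec_mulVec,
        ← Matrix.mulVec_mulVec]
    have e8 : δ ⬝ᵥ M *ᵥ δ = δ ⬝ᵥ ((n : ℝ) • Sig⁻¹) *ᵥ δ + δ ⬝ᵥ R⁻¹ *ᵥ δ := by
      rw [hMdef, Matrix.add_mulVec, dotProduct_add]
    rw [e1, e2, e3, e4, e5, e6, e7, e8]
    ring
  -- rewrite the integrand
  have hint : ∀ δ : Fin s → ℝ,
      ((2 * Real.pi) ^ (-((n : ℝ) * (s : ℝ)) / 2) * Sig.det ^ (-(n : ℝ) / 2) *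
          Real.exp (-(1 / 2) * ((v - E *ᵥ δ) ⬝ᵥ A0 *ᵥ (v - E *ᵥ δ))))
        * ((2 * Real.pi) ^ (-(s : ℝ) / 2) * R.det ^ (-(1 : ℝ) / 2) *
            Real.exp (-(1 / 2) * (δ ⬝ᵥ R⁻¹ *ᵥ δ)))
      = ((2 * Real.pi) ^ (-((n : ℝ) * (s : ℝ)) / 2) * Sig.det ^ (-(n : ℝ) / 2)
          * ((2 * Real.pi) ^ (-(s : ℝ) / 2) * R.det ^ (-(1 : ℝ) / 2))
          * Real.exp (-(1 / 2) * (v ⬝ᵥ W⁻¹ *ᵥ v)))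
        * Real.exp (-(1 / 2) * ((δ - m0) ⬝ᵥ M *ᵥ (δ - m0))) := by
    intro δ
    have h := hquad δ
    have hexp : Real.exp (-(1 / 2) * ((v - E *ᵥ δ) ⬝ᵥ A0 *ᵥ (v - E *ᵥ δ)))
        * Real.exp (-(1 / 2) * (δ ⬝ᵥ R⁻¹ *ᵥ δ))
        = Real.exp (-(1 / 2) * (v ⬝ᵥ W⁻¹ *ᵥ v))
          * Real.exp (-(1 / 2) * ((δ - m0) ⬝ᵥ M *ᵥ (δ - m0))) := by
      rw [← Real.exp_add, ← Real.exp_add]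
      congr 1
      linear_combination (-(1 : ℝ) / 2) * h
    calc _ = ((2 * Real.pi) ^ (-((n : ℝ) * (s : ℝ)) / 2) * Sig.det ^ (-(n : ℝ) / 2)
          * ((2 * Real.pi) ^ (-(s : ℝ) / 2) * R.det ^ (-(1 : ℝ) / 2)))
          * (Real.exp (-(1 / 2) * ((v - E *ᵥ δ) ⬝ᵥ A0 *ᵥ (v - E *ᵥ δ)))
            * Real.exp (-(1 / 2) * (δ ⬝ᵥ R⁻¹ *ᵥ δ))) := by ring
      _ = _ := by rw [hexp]; ring
  simp only [hint]
  rw [MeasureTheory.integral_const_mul]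
  have htrans : (∫ δ : Fin s → ℝ, Real.exp (-(1 / 2) * ((δ - m0) ⬝ᵥ M *ᵥ (δ - m0))))
      = ∫ x : Fin s → ℝ, Real.exp (-(1 / 2) * (x ⬝ᵥ M *ᵥ x)) :=
    integral_sub_right_eq_self (fun x => Real.exp (-(1 / 2) * (x ⬝ᵥ M *ᵥ x))) m0
  rw [htrans, gauss_int hMPD]
  have h2pi : (0 : ℝ) < 2 * Real.pi := by positivity
  have e1 : (2 * Real.pi) ^ (-(s : ℝ) / 2) * (2 * Real.pi) ^ ((s : ℝ) / 2) = 1 := by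
    rw [← Real.rpow_add h2pi, show -(s : ℝ) / 2 + (s : ℝ) / 2 = 0 by ring, Real.rpow_zero]
  have e2 : W.det ^ (-(1 : ℝ) / 2)
      = Sig.det ^ (-(n : ℝ) / 2) * (M.det ^ (-(1 : ℝ) / 2) * R.det ^ (-(1 : ℝ) / 2)) := by
    rw [hdetW, Real.mul_rpow (pow_pos hSig.det_pos n).le (mul_pos hMPD.det_pos hR.det_pos).le,
      Real.mul_rpow hMPD.det_pos.le hR.det_pos.le]
    congr 1
    rw [← Real.rpow_natCast Sig.det n, ← Real.rpow_mul hSig.det_pos.le]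
    congr 1
    push_cast
    ring
  rw [e2]
  linear_combination ((2 * Real.pi) ^ (-((n : ℝ) * (s : ℝ)) / 2) * Sig.det ^ (-(n : ℝ) / 2)
    * R.det ^ (-(1 : ℝ) / 2) * M.det ^ (-(1 : ℝ) / 2)
    * Real.exp (-(1 / 2) * (v ⬝ᵥ W⁻¹ *ᵥ v))) * e1
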